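/- Let a > 0, Y₁ < Y₀ < 0, and let w : (Y₁, Y₀] → ℝ be differentiable with w(Y) > 1 for all Y and w'(Y) ≤ −a·w(Y)(w(Y)−1)/(−Y) for all Y ∈ (Y₁, Y₀]. Set C := (1 − 1/w(Y₀))·(−Y₀)^(−a) > 0. Then for every Y ∈ (Y₁, Y₀]: C·(−Y)^a < 1 and w(Y) ≥ 1/(1 − C·(−Y)^a). In particular, Y₁ ≥ −C^(−1/a). -/

import Mathlib

theorem stmt_9 (a Y₀ Y₁ : ℝ) (ha : 0 < a) (hY : Y₁ < Y₀) (hY0 : Y₀ < 0)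
    (w w' : ℝ → ℝ)
    (hw1 : ∀ Y ∈ Set.Ioc Y₁ Y₀, 1 < w Y)
    (hderiv : ∀ Y ∈ Set.Ioc Y₁ Y₀, HasDerivAt w (w' Y) Y)
    (hineq : ∀ Y ∈ Set.Ioc Y₁ Y₀, w' Y ≤ -a * (w Y) * (w Y - 1) / (-Y))
    (C : ℝ) (hC : C = (1 - 1/(w Y₀)) * (-Y₀) ^ (-a)) :
    0 < C ∧
    (∀ Y ∈ Set.Ioc Y₁ Y₀, C * (-Y) ^ a < 1 ∧ 1/(1 - C * (-Y) ^ a) ≤ w Y) ∧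
    Y₁ ≥ -(C ^ (-1/a)) := by
  have hw0 : ∀ Y ∈ Set.Ioc Y₁ Y₀, 0 < w Y := fun Y hYm => lt_trans one_pos (hw1 Y hYm)
  have hY0mem : Y₀ ∈ Set.Ioc Y₁ Y₀ := ⟨hY, le_refl _⟩
  have hCpos : 0 < C := by
    rw [hC]
    have h1 : 0 < 1 - 1/(w Y₀) := by
      rw [sub_pos, div_lt_one (hw0 Y₀ hY0mem)]; exact hw1 Y₀ hY0mem
    exact mul_pos h1 (Real.rpow_pos_of_pos (by linarith) _)
  set g : ℝ → ℝ := fun Y => (1 - 1/(w Y)) * (-Y) ^ (-a) with hg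
  have hgderiv : ∀ Y ∈ Set.Ioc Y₁ Y₀, HasDerivAt g
      ((w' Y / (w Y)^2) * (-Y) ^ (-a) + (1 - 1/(w Y)) * (a * (-Y) ^ (-a-1))) Y := by
    intro Y hYm
    have hYneg : Y < 0 := lt_of_le_of_lt hYm.2 hY0
    have hwY : w Y ≠ 0 := ne_of_gt (hw0 Y hYm)
    have h1 : HasDerivAt (fun Y => 1 - 1/(w Y)) (w' Y / (w Y)^2) Y := by
      have h := (hasDerivAt_const Y (1:ℝ)).sub ((hderiv Y hYm).inv hwY)
      simp only [one_div]
      refine h.congr_deriv ?_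
      ring
    have h2 : HasDerivAt (fun Y : ℝ => (-Y) ^ (-a)) (a * (-Y) ^ (-a-1)) Y := by
      have hne : (-Y) ≠ 0 := by simp [hYneg.ne]
      have h := (Real.hasDerivAt_rpow_const (x := -Y) (p := -a) (Or.inl hne)).comp Y
        (hasDerivAt_neg Y)
      refine h.congr_deriv ?_
      ring
    exact h1.mul h2
  have hgd_nonpos : ∀ Y ∈ Set.Ioc Y₁ Y₀,
      (w' Y / (w Y)^2) * (-Y) ^ (-a) + (1 - 1/(w Y)) * (a * (-Y) ^ (-a-1)) ≤ 0 := by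
    intro Y hYm
    have hYneg : Y < 0 := lt_of_le_of_lt hYm.2 hY0
    have hYpos : 0 < -Y := by linarith
    have hwY : 0 < w Y := hw0 Y hYm
    have hP : 0 < (-Y) ^ (-a) := Real.rpow_pos_of_pos hYpos _
    have hPm : (-Y) ^ (-a-1) = (-Y) ^ (-a) / (-Y) := by
      rw [show -a-1 = -a - 1 from rfl, Real.rpow_sub hYpos, Real.rpow_one]
    have hv : w' Y * (-Y) ≤ -a * w Y * (w Y - 1) := by
      have := hineq Y hYm
      rwa [le_div_iff₀ hYpos] at this
    have key : (w' Y / (w Y)^2) * (-Y) ^ (-a) + (1 - 1/(w Y)) * (a * (-Y) ^ (-a-1))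
        = (-Y) ^ (-a) * (w' Y * (-Y) + a * w Y * (w Y - 1)) / ((w Y)^2 * (-Y)) := by
      have hYne : Y ≠ 0 := hYneg.ne
      have hwne : w Y ≠ 0 := hwY.ne'
      rw [hPm]
      field_simp
      ring
    rw [key]
    apply div_nonpos_of_nonpos_of_nonneg
    · nlinarith [hP]
    · positivity
  have mono : ∀ Y ∈ Set.Ioc Y₁ Y₀, C ≤ g Y := by
    intro Y hYm
    have hsub : Set.Icc Y Y₀ ⊆ Set.Ioc Y₁ Y₀ := fun z hz => ⟨lt_of_lt_of_le hYm.1 hz.1, hz.2⟩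
    have hanti : AntitoneOn g (Set.Icc Y Y₀) := by
      apply antitoneOn_of_deriv_nonpos (convex_Icc Y Y₀)
      · exact fun z hz => (hgderiv z (hsub hz)).continuousAt.continuousWithinAt
      · intro z hz
        rw [interior_Icc] at hz
        exact (hgderiv z (hsub (Set.Ioo_subset_Icc_self hz))).differentiableAt.differentiableWithinAt
      · intro z hz
        rw [interior_Icc] at hz
        have hd := hgderiv z (hsub (Set.Ioo_subset_Icc_self hz))
        rw [hd.deriv]
        exact hgd_nonpos z (hsub (Set.Ioo_subset_Icc_self hz))
    have h := hanti ⟨le_refl Y, hYm.2⟩ ⟨hYm.2, le_refl Y₀⟩ hYm.2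
    calc C = g Y₀ := by rw [hC]
    _ ≤ g Y := h
  have part2 : ∀ Y ∈ Set.Ioc Y₁ Y₀, C * (-Y) ^ a < 1 ∧ 1/(1 - C * (-Y) ^ a) ≤ w Y := by
    intro Y hYm
    have hYneg : Y < 0 := lt_of_le_of_lt hYm.2 hY0
    have hYpos : 0 < -Y := by linarith
    have hwY : 0 < w Y := hw0 Y hYm
    have hA : (0:ℝ) < (-Y) ^ a := Real.rpow_pos_of_pos hYpos a
    have h5 : C * (-Y) ^ a ≤ 1 - 1/(w Y) := by
      have h := mono Y hYm
      rw [hg] at h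
      simp only [Real.rpow_neg hYpos.le, ← div_eq_mul_inv] at h
      rwa [le_div_iff₀ hA] at h
    have hinv : 0 < 1/(w Y) := by positivity
    have hlt : C * (-Y) ^ a < 1 := by linarith
    refine ⟨hlt, ?_⟩
    have h6 : 0 < 1 - C * (-Y) ^ a := by linarith
    rw [div_le_iff₀ h6]
    have h7 : 1/(w Y) ≤ 1 - C * (-Y) ^ a := by linarith
    calc (1:ℝ) = w Y * (1/(w Y)) := by field_simp
    _ ≤ w Y * (1 - C * (-Y) ^ a) := mul_le_mul_of_nonneg_left h7 hwY.le
  refine ⟨hCpos, part2, ?_⟩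
  have hane : a ≠ 0 := ha.ne'
  have hZ : (C ^ (-1/a)) ^ a = C⁻¹ := by
    have hm : (-1/a) * a = -1 := by field_simp
    rw [← Real.rpow_mul hCpos.le, hm, Real.rpow_neg_one]
  have hCC : C * (C ^ (-1/a)) ^ a = 1 := by rw [hZ]; exact mul_inv_cancel₀ hCpos.ne'
  by_contra hcon
  push_neg at hcon
  have hZY0 : -(C ^ (-1/a)) < Y₀ := by
    by_contra h
    push_neg at h
    have hle : C ^ (-1/a) ≤ -Y₀ := by linarith
    have hr := Real.rpow_le_rpow (Real.rpow_pos_of_pos hCpos (-1/a)).le hle ha.le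
    have h7 := (part2 Y₀ hY0mem).1
    nlinarith [mul_le_mul_of_nonneg_left hr hCpos.le]
  have hmem : -(C ^ (-1/a)) ∈ Set.Ioc Y₁ Y₀ := ⟨hcon, hZY0.le⟩
  have hfin := (part2 _ hmem).1
  rw [neg_neg, hCC] at hfin
  exact lt_irrefl 1 hfin
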